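/- Let 𝒫 be a partition of [n] = {1,…,n} with k parts, and let s := [Sym(n) : SStab_n(𝒫)] be the index of the setwise stabiliser of 𝒫 in Sym(n). Then s ≥ (1/(n+1))·C(n+1, k), where C(n+1,k) denotes the binomial coefficient; in particular s ≥ (1/(n+1))·C(n, k) and s ≥ (1/(n+1))·C(n, min{k, n−k}). -/

import Mathlib

open Pointwise

lemma fact_mul_fact_le_aux (a b : ℕ) (ha : 1 ≤ a) (hb : 1 ≤ b) :
    a.factorial * b.factorial ≤ (a + b - 1).factorial := by
  obtain ⟨a, rfl⟩ : ∃ c, a = c + 1 := ⟨a - 1, by omega⟩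
  clear ha
  induction a with
  | zero => simp [Nat.factorial_le (show b ≤ 1 + b - 1 by omega)]
  | succ a ih =>
    calc (a+1+1).factorial * b.factorial = (a+1+1) * ((a+1).factorial * b.factorial) := by
          rw [Nat.factorial_succ]; ring
      _ ≤ (a+1+1) * (a + 1 + b - 1).factorial := Nat.mul_le_mul_left _ ih
      _ ≤ (a + 1 + b) * (a + 1 + b - 1).factorial := Nat.mul_le_mul_right _ (by omega)
      _ = (a + 1 + b).factorial := by
          rw [← Nat.succ_pred_eq_of_pos (show 0 < a + 1 + b by omega), Nat.factorial_succ]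
          simp
      _ = (a + 1 + 1 + b - 1).factorial := by congr 1; omega

lemma prod_fact_le {ι : Type*} [DecidableEq ι] (t : Finset ι) (f : ι → ℕ)
    (hf : ∀ i ∈ t, 1 ≤ f i) :
    ∏ i ∈ t, (f i).factorial ≤ ((∑ i ∈ t, f i) - (t.card - 1)).factorial := by
  induction t using Finset.induction_on with
  | empty => simp
  | insert _ _ hnm ih =>
    rename_i a t
    rw [Finset.prod_insert hnm, Finset.sum_insert hnm, Finset.card_insert_of_notMem hnm]
    have h1 : ∀ i ∈ t, 1 ≤ f i := fun i hi => hf i (Finset.mem_insert_of_mem hi)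
    have hfa : 1 ≤ f a := hf a (Finset.mem_insert_self a t)
    rcases t.eq_empty_or_nonempty with rfl | hne
    · simpa using Nat.factorial_le (by simp)
    · have hc : 1 ≤ t.card := Finset.card_pos.mpr hne
      have hsum : t.card ≤ ∑ i ∈ t, f i := by
        calc t.card = ∑ _i ∈ t, 1 := by simp
          _ ≤ ∑ i ∈ t, f i := Finset.sum_le_sum h1
      calc (f a).factorial * ∏ i ∈ t, (f i).factorial
          ≤ (f a).factorial * ((∑ i ∈ t, f i) - (t.card - 1)).factorial :=
            Nat.mul_le_mul_left _ (ih h1)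
        _ ≤ (f a + ((∑ i ∈ t, f i) - (t.card - 1)) - 1).factorial :=
            fact_mul_fact_le_aux _ _ hfa (by omega)
        _ = (f a + ∑ i ∈ t, f i - (t.card + 1 - 1)).factorial := by congr 1; omega

lemma natcard_perm (α : Type*) [Finite α] :
    Nat.card (Equiv.Perm α) = (Nat.card α).factorial := by
  haveI := Fintype.ofFinite α
  classical
  simp [Nat.card_eq_fintype_card, Fintype.card_perm]

section Main

variable {n : ℕ} {C : Set (Set (Fin n))}

/-- The permutation of the parts induced by an element of the stabiliser. -/
noncomputable def partPerm (σ : ↥(MulAction.stabilizer (Equiv.Perm (Fin n)) C)) :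
    Equiv.Perm C where
  toFun P := ⟨(σ : Equiv.Perm (Fin n)) • (P : Set (Fin n)), by
    exact (MulAction.mem_stabilizer_iff.mp σ.2).subset (Set.smul_mem_smul_set P.2)⟩
  invFun P := ⟨(σ : Equiv.Perm (Fin n))⁻¹ • (P : Set (Fin n)), by
    have h2 : (σ : Equiv.Perm (Fin n))⁻¹ • C = C :=
      inv_smul_eq_iff.mpr (MulAction.mem_stabilizer_iff.mp σ.2).symm
    exact h2.subset (Set.smul_mem_smul_set P.2)⟩
  left_inv P := Subtype.ext (inv_smul_smul _ _)
  right_inv P := Subtype.ext (smul_inv_smul _ _)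

noncomputable def partHom :
    ↥(MulAction.stabilizer (Equiv.Perm (Fin n)) C) →* Equiv.Perm C where
  toFun := partPerm
  map_one' := by ext P; simp [partPerm]
  map_mul' σ τ := by ext P; simp [partPerm, mul_smul]

/-- If `C` is a partition of `[n]` with `k` parts and `s` is the index of the
setwise stabiliser of `C` in `Sym(n)`, then `s ≥ C(n+1, k)/(n+1)`; in
particular `s ≥ C(n, k)/(n+1)` and `s ≥ C(n, min{k, n-k})/(n+1)`. -/
theorem stmt_10 (n : ℕ) (C : Set (Set (Fin n))) (hC : Setoid.IsPartition C)
    (k : ℕ) (hk : C.ncard = k)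
    (s : ℕ) (hs : s = (MulAction.stabilizer (Equiv.Perm (Fin n)) C).index) :
    (1 / (n + 1) : ℝ) * (n + 1).choose k ≤ s ∧
      (1 / (n + 1) : ℝ) * n.choose k ≤ s ∧
      (1 / (n + 1) : ℝ) * n.choose (min k (n - k)) ≤ s := by
  classical
  set G := MulAction.stabilizer (Equiv.Perm (Fin n)) C with hG
  -- sigma equivalence
  have sigEq : (Σ P : C, ↥(P : Set (Fin n))) ≃ Fin n := by
    apply Equiv.ofBijective (fun x => (x.2 : Fin n))
    constructor
    · rintro ⟨⟨P, hP⟩, x, hx⟩ ⟨⟨Q, hQ⟩, y, hy⟩ (h : (x : Fin n) = y)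
      obtain ⟨R, hR⟩ := hC.2 x
      have hPQ : P = Q := by
        have h1 := hR.2 P ⟨hP, hx⟩
        have h2 := hR.2 Q ⟨hQ, h ▸ hy⟩
        rw [h1, h2]
      subst hPQ
      simp only [Sigma.mk.inj_iff, Subtype.mk.injEq, heq_eq_eq]
      exact ⟨trivial, h⟩
    · intro x
      obtain ⟨R, ⟨⟨hR, hx⟩, _⟩⟩ := hC.2 x
      exact ⟨⟨⟨R, hR⟩, ⟨x, hx⟩⟩, rfl⟩
  haveI : Fintype ↥C := Fintype.ofFinite _
  haveI : ∀ P : C, Fintype ↥(P : Set (Fin n)) := fun P => Fintype.ofFinite _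
  -- cardinalities
  have hkC : Nat.card ↥C = k := by rw [Nat.card_coe_set_eq, hk]
  have hpos : ∀ P : C, 1 ≤ Nat.card ↥(P : Set (Fin n)) := by
    intro P
    haveI : Nonempty ↥(P : Set (Fin n)) := by
      rw [Set.nonempty_coe_sort, Set.nonempty_iff_ne_empty]
      intro h
      exact hC.1 (h ▸ P.2)
    exact Nat.card_pos
  have hsum : ∑ P : C, Nat.card ↥(P : Set (Fin n)) = n := by
    have h := Nat.card_congr sigEq
    rw [Nat.card_eq_fintype_card, Nat.card_eq_fintype_card, Fintype.card_sigma,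
      Fintype.card_fin] at h
    simp only [Nat.card_eq_fintype_card]
    exact h
  have hkn : k ≤ n := by
    rw [← hsum, ← hkC, Nat.card_eq_fintype_card, ← Finset.card_univ]
    calc (Finset.univ : Finset ↥C).card = ∑ _P : C, 1 := by simp
      _ ≤ ∑ P : C, Nat.card ↥(P : Set (Fin n)) := Finset.sum_le_sum fun P _ => hpos P
  -- kernel fixes each part
  set φ : ↥G →* Equiv.Perm C := partHom with hφ
  have hfix : ∀ (σ : ↥φ.ker) (P : C),
      ((σ : ↥G) : Equiv.Perm (Fin n)) • (P : Set (Fin n)) = P := by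
    intro σ P
    have h1 : φ (σ : ↥G) = 1 := MonoidHom.mem_ker.mp σ.2
    have h2 : (φ (σ : ↥G)) P = P := by rw [h1]; rfl
    exact congrArg Subtype.val h2
  -- kernel injection
  have hker : Nat.card ↥φ.ker ≤ ∏ P : C, (Nat.card ↥(P : Set (Fin n))).factorial := by
    have hle : Nat.card ↥φ.ker ≤ Nat.card (Π P : C, Equiv.Perm ↥(P : Set (Fin n))) := by
      apply Nat.card_le_card_of_injective
        (fun σ P =>
          { toFun := fun x => ⟨((σ : ↥G) : Equiv.Perm (Fin n)) x.1, by
              exact (hfix σ P).subset (Set.smul_mem_smul_set x.2)⟩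
            invFun := fun x => ⟨((σ : ↥G) : Equiv.Perm (Fin n))⁻¹ x.1, by
              have hP' : ((σ : ↥G) : Equiv.Perm (Fin n))⁻¹ • (P : Set (Fin n)) = P :=
                inv_smul_eq_iff.mpr (hfix σ P).symm
              exact hP'.subset (Set.smul_mem_smul_set x.2)⟩
            left_inv := fun x => Subtype.ext (by simp)
            right_inv := fun x => Subtype.ext (by simp) })
        ?_
      intro σ τ h
      refine Subtype.ext (Subtype.ext (Equiv.ext fun x => ?_))
      obtain ⟨R, ⟨⟨hR, hx⟩, _⟩⟩ := hC.2 x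
      have h2 := congrFun h ⟨R, hR⟩
      have h3 := Equiv.ext_iff.mp h2 ⟨x, hx⟩
      exact congrArg Subtype.val h3
    calc Nat.card ↥φ.ker ≤ _ := hle
      _ = ∏ P : C, (Nat.card ↥(P : Set (Fin n))).factorial := by
        rw [Nat.card_pi]
        exact Finset.prod_congr rfl fun P _ => natcard_perm _
  -- range bound
  have hrange : Nat.card ↥φ.range ≤ Nat.factorial k := by
    have := Nat.card_le_card_of_injective (Subtype.val : ↥φ.range → Equiv.Perm C)
      Subtype.val_injective
    rw [natcard_perm, hkC] at this
    exact this
  -- |G| bound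
  have hGcard : Nat.card ↥G ≤ Nat.factorial k * Nat.factorial (n + 1 - k) := by
    have h1 : Nat.card ↥G = Nat.card (↥G ⧸ φ.ker) * Nat.card ↥φ.ker :=
      Subgroup.card_eq_card_quotient_mul_card_subgroup φ.ker
    have h2 : Nat.card (↥G ⧸ φ.ker) = Nat.card ↥φ.range :=
      Nat.card_congr (QuotientGroup.quotientKerEquivRange φ).toEquiv
    have h3 : ∏ P : C, (Nat.card ↥(P : Set (Fin n))).factorial ≤
        Nat.factorial (n + 1 - k) := by
      calc ∏ P : C, (Nat.card ↥(P : Set (Fin n))).factorial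
          ≤ ((∑ P : C, Nat.card ↥(P : Set (Fin n))) -
              ((Finset.univ : Finset ↥C).card - 1)).factorial :=
            prod_fact_le _ _ fun P _ => hpos P
        _ ≤ Nat.factorial (n + 1 - k) := by
            apply Nat.factorial_le
            rw [hsum, Finset.card_univ, ← Nat.card_eq_fintype_card, hkC]
            omega
    calc Nat.card ↥G = Nat.card (↥G ⧸ φ.ker) * Nat.card ↥φ.ker := h1
      _ = Nat.card ↥φ.range * Nat.card ↥φ.ker := by rw [h2]
      _ ≤ Nat.factorial k * Nat.factorial (n + 1 - k) :=
          Nat.mul_le_mul hrange (hker.trans h3)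
  -- index bound
  have hmain : (n + 1).choose k ≤ (n + 1) * s := by
    have hm : 0 < Nat.card ↥G := Nat.card_pos
    have hsm : s * Nat.card ↥G = n.factorial := by
      rw [hs]
      rw [Subgroup.index_mul_card G, Nat.card_eq_fintype_card, Fintype.card_perm,
        Fintype.card_fin]
    have key : (n + 1).choose k * Nat.card ↥G ≤ (n + 1) * s * Nat.card ↥G := by
      calc (n + 1).choose k * Nat.card ↥G
          ≤ (n + 1).choose k * (Nat.factorial k * Nat.factorial (n + 1 - k)) :=
            Nat.mul_le_mul_left _ hGcard
        _ = (n + 1).choose k * Nat.factorial k * Nat.factorial (n + 1 - k) := by ring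
        _ = (n + 1).factorial := Nat.choose_mul_factorial_mul_factorial (by omega)
        _ = (n + 1) * n.factorial := Nat.factorial_succ n
        _ = (n + 1) * (s * Nat.card ↥G) := by rw [hsm]
        _ = (n + 1) * s * Nat.card ↥G := by ring
    exact Nat.le_of_mul_le_mul_right key hm
  -- conclude
  have habs : ∀ X : ℕ, X ≤ (n + 1) * s → (1 / (n + 1) : ℝ) * X ≤ s := by
    intro X hX
    rw [div_mul_eq_mul_div, one_mul, div_le_iff₀ (by positivity)]
    have : (X : ℝ) ≤ ((n + 1) * s : ℕ) := Nat.cast_le.mpr hX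
    push_cast at this ⊢
    linarith
  refine ⟨habs _ hmain, habs _ ?_, habs _ ?_⟩
  · exact le_trans (Nat.choose_le_choose k (Nat.le_succ n)) hmain
  · have : n.choose (min k (n - k)) = n.choose k := by
      rcases le_total k (n - k) with h | h
      · rw [min_eq_left h]
      · rw [min_eq_right h, Nat.choose_symm hkn]
    rw [this]
    exact le_trans (Nat.choose_le_choose k (Nat.le_succ n)) hmain

end Main
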